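/- A unit-speed curve α with positive curvature is a geodesic on a circular cone with vertex at the origin if and only if α is simultaneously a rectifying curve and a slant helix. -/

import Mathlib

open Real Set
open scoped RealInnerProductSpace

noncomputable section

/-- Euclidean 3-space. -/
abbrev E3 := EuclideanSpace ℝ (Fin 3)

/-- Constructor for points of `E3`. -/
def e3 (x y z : ℝ) : E3 := (WithLp.equiv 2 (Fin 3 → ℝ)).symm ![x, y, z]

/-- The cross product on `E3`. -/
def cross3 (a b : E3) : E3 :=
  e3 (a 1 * b 2 - a 2 * b 1) (a 2 * b 0 - a 0 * b 2) (a 0 * b 1 - a 1 * b 0)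

/-- The circle at angle `ψ` on the unit sphere, parametrized by arc length. -/
def ycirc (ψ t : ℝ) : E3 :=
  e3 (Real.sin ψ * Real.cos (t / Real.sin ψ)) (Real.sin ψ * Real.sin (t / Real.sin ψ)) (Real.cos ψ)

/-- The derivative of `ycirc ψ`. -/
def ycirc' (ψ t : ℝ) : E3 :=
  e3 (-Real.sin (t / Real.sin ψ)) (Real.cos (t / Real.sin ψ)) 0

/-! ### Auxiliary lemmas -/

@[simp] lemma e3_apply0 (x y z : ℝ) : (e3 x y z) 0 = x := rfl
@[simp] lemma e3_apply1 (x y z : ℝ) : (e3 x y z) 1 = y := rfl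
@[simp] lemma e3_apply2 (x y z : ℝ) : (e3 x y z) 2 = z := rfl

lemma inner3 (x y : E3) : ⟪x,y⟫ = x 0 * y 0 + x 1 * y 1 + x 2 * y 2 := by
  simp [PiLp.inner_apply, Fin.sum_univ_three, mul_comm]

lemma E3.ext' {x y : E3} (h0 : x 0 = y 0) (h1 : x 1 = y 1) (h2 : x 2 = y 2) : x = y := by
  apply PiLp.ext; intro i; fin_cases i <;> assumption

@[simp] lemma E3smul_apply (r : ℝ) (x : E3) (i : Fin 3) : (r • x) i = r * x i := rfl
@[simp] lemma E3add_apply (x y : E3) (i : Fin 3) : (x + y) i = x i + y i := rfl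
@[simp] lemma E3sub_apply (x y : E3) (i : Fin 3) : (x - y) i = x i - y i := rfl

lemma cross3_inner_left (a b : E3) : ⟪cross3 a b, a⟫ = 0 := by
  simp [inner3, cross3, PiLp.inner_apply, Fin.sum_univ_three]; ring
lemma cross3_inner_right (a b : E3) : ⟪cross3 a b, b⟫ = 0 := by
  simp [inner3, cross3, PiLp.inner_apply, Fin.sum_univ_three]; ring
lemma cross3_lagrange (a b : E3) :
    ⟪cross3 a b, cross3 a b⟫ = ⟪a,a⟫ * ⟪b,b⟫ - ⟪a,b⟫^2 := by
  simp only [inner3, cross3, e3_apply0, e3_apply1, e3_apply2]; ring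
lemma cross3_triple (a b c : E3) :
    cross3 a (cross3 b c) = ⟪a,c⟫ • b - ⟪a,b⟫ • c := by
  apply E3.ext' <;> simp [inner3, cross3, PiLp.inner_apply, Fin.sum_univ_three] <;> ring

lemma cross_ycirc (ψ t : ℝ) :
    cross3 (ycirc' ψ t) (ycirc ψ t)
      = e3 (Real.cos ψ * Real.cos (t / Real.sin ψ)) (Real.cos ψ * Real.sin (t / Real.sin ψ))
          (-Real.sin ψ) := by
  refine E3.ext' ?_ ?_ ?_ <;>
      simp only [cross3, ycirc, ycirc', e3_apply0, e3_apply1, e3_apply2]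
  · ring
  · ring
  · linear_combination (-Real.sin ψ) * (Real.sin_sq_add_cos_sq (t / Real.sin ψ))

lemma inner_y_cross (ψ t : ℝ) : ⟪ycirc ψ t, cross3 (ycirc' ψ t) (ycirc ψ t)⟫ = 0 := by
  rw [cross_ycirc, inner3]; simp only [e3_apply0, e3_apply1, e3_apply2, ycirc]
  linear_combination (Real.sin ψ * Real.cos ψ) * (Real.sin_sq_add_cos_sq (t / Real.sin ψ))

lemma inner_cross_e3 (ψ t : ℝ) : ⟪cross3 (ycirc' ψ t) (ycirc ψ t), e3 0 0 1⟫ = -Real.sin ψ := by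
  rw [cross_ycirc, inner3]; simp

lemma norm_e3_001 : ‖e3 0 0 1‖ = 1 := by
  have h1 : ⟪e3 0 0 1, e3 0 0 1⟫ = 1 := by rw [inner3]; simp
  have h := real_inner_self_eq_norm_sq (e3 0 0 1)
  nlinarith [norm_nonneg (e3 0 0 1)]

lemma cross_ycirc_decomp (ψ t : ℝ) (h : Real.sin ψ ≠ 0) :
    cross3 (ycirc' ψ t) (ycirc ψ t)
      = (Real.cos ψ / Real.sin ψ) • ycirc ψ t - (Real.sin ψ)⁻¹ • e3 0 0 1 := by
  rw [cross_ycirc]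
  refine E3.ext' ?_ ?_ ?_ <;>
      simp only [ycirc, e3_apply0, e3_apply1, e3_apply2, E3smul_apply, E3sub_apply]
  · field_simp; ring
  · field_simp; ring
  · field_simp
    nlinarith [Real.sin_sq_add_cos_sq ψ]

lemma const_of_deriv0 {I : Set ℝ} (hIo : IsOpen I) (hIc : Convex ℝ I) {g : ℝ → ℝ}
    (h : ∀ s ∈ I, HasDerivAt g 0 s) {x y : ℝ} (hx : x ∈ I) (hy : y ∈ I) : g x = g y := by
  apply hIc.is_const_of_fderivWithin_eq_zero (𝕜 := ℝ)
    (fun s hs => ((h s hs).differentiableAt.differentiableWithinAt)) _ hx hy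
  intro s hs
  rw [fderivWithin_of_isOpen hIo hs]
  have hd := (h s hs).hasFDerivAt.fderiv
  rw [hd]; ext v; simp

lemma deriv_unique_on {X : Type*} [NormedAddCommGroup X] [NormedSpace ℝ X]
    {I : Set ℝ} (hIo : IsOpen I) {f g : ℝ → X} {d e : X} {s : ℝ}
    (hs : s ∈ I) (hf : HasDerivAt f d s) (hg : HasDerivAt g e s) (h : ∀ x ∈ I, f x = g x) :
    d = e := by
  have he : f =ᶠ[nhds s] g := Filter.eventuallyEq_of_mem (hIo.mem_nhds hs) h
  exact (he.hasDerivAt_iff.mp hf).unique hg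

lemma deriv_eq_zero_of_const {X : Type*} [NormedAddCommGroup X] [NormedSpace ℝ X]
    {I : Set ℝ} (hIo : IsOpen I) {f : ℝ → X} {d : X} {c : X} {s : ℝ}
    (hs : s ∈ I) (hd : HasDerivAt f d s) (h : ∀ x ∈ I, f x = c) : d = 0 := by
  exact deriv_unique_on hIo hs hd (hasDerivAt_const s c) h

lemma const_of_discrete_values {I : Set ℝ} (hIc : Convex ℝ I) {f : ℝ → ℝ} {c : ℝ} (hc : 0 < c)
    (hcont : ∀ s ∈ I, ContinuousAt f s)
    (hval : ∀ s ∈ I, f s = c ∨ f s = -c) {x y : ℝ} (hx : x ∈ I) (hy : y ∈ I) : f x = f y := by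
  have hsub : uIcc x y ⊆ I := hIc.ordConnected.uIcc_subset hx hy
  have hcon : ContinuousOn f (uIcc x y) := fun z hz => (hcont z (hsub hz)).continuousWithinAt
  have hiv := intermediate_value_uIcc hcon
  rcases hval x hx with h1 | h1 <;> rcases hval y hy with h2 | h2 <;> rw [h1, h2]
  · exfalso
    have h0 : (0:ℝ) ∈ uIcc (f x) (f y) := by
      rw [h1, h2]; rw [Set.mem_uIcc]; right; constructor <;> linarith
    obtain ⟨z, hz, hfz⟩ := hiv h0
    rcases hval z (hsub hz) with h | h <;> rw [hfz] at h <;> linarith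
  · exfalso
    have h0 : (0:ℝ) ∈ uIcc (f x) (f y) := by
      rw [h1, h2]; rw [Set.mem_uIcc]; left; constructor <;> linarith
    obtain ⟨z, hz, hfz⟩ := hiv h0
    rcases hval z (hsub hz) with h | h <;> rw [hfz] at h <;> linarith

set_option maxHeartbeats 2000000 in
/-- A unit-speed curve with positive curvature is a geodesic on a circular cone
with vertex at the origin iff it is simultaneously a rectifying curve and a
slant helix. -/
theorem geodesic_on_circular_cone_iff (I : Set ℝ) (hIo : IsOpen I) (hIc : Convex ℝ I)
    (α T N B : ℝ → E3) (κ τ : ℝ → ℝ)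
    (hα : ∀ s ∈ I, HasDerivAt α (T s) s)
    (hT : ∀ s ∈ I, HasDerivAt T (κ s • N s) s)
    (hN : ∀ s ∈ I, HasDerivAt N ((-κ s) • T s + τ s • B s) s)
    (hB : ∀ s ∈ I, HasDerivAt B ((-τ s) • N s) s)
    (hTu : ∀ s ∈ I, ‖T s‖ = 1)
    (hNu : ∀ s ∈ I, ‖N s‖ = 1)
    (hBdef : ∀ s ∈ I, B s = cross3 (T s) (N s))
    (hκ : ∀ s ∈ I, 0 < κ s)
    (hne : I.Nonempty) :
    (∃ ψ : ℝ, ψ ∈ Set.Ioo 0 (Real.pi / 2) ∧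
      ∃ (R : E3 ≃ₗᵢ[ℝ] E3) (u t : ℝ → ℝ), ∀ s ∈ I,
        0 < u s ∧
        α s = u s • R (ycirc ψ (t s)) ∧
        (N s = R (cross3 (ycirc' ψ (t s)) (ycirc ψ (t s))) ∨
         N s = -R (cross3 (ycirc' ψ (t s)) (ycirc ψ (t s))))) ↔
      ((∀ s ∈ I, ⟪α s, N s⟫ = 0) ∧
       ∃ U : E3, ‖U‖ = 1 ∧ ∃ k : ℝ, ∀ s ∈ I, ⟪N s, U⟫ = k) := by
  obtain ⟨s₀, hs₀⟩ := hne
  constructor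
  · rintro ⟨ψ, ⟨hψ0, hψπ⟩, R, u, t, hgeo⟩
    have hπ : ψ < Real.pi := lt_trans hψπ (by linarith [Real.pi_pos])
    have hsψ : 0 < Real.sin ψ := Real.sin_pos_of_pos_of_lt_pi hψ0 hπ
    constructor
    · intro s hs
      obtain ⟨hu, hα', hN'⟩ := hgeo s hs
      have hbase : ⟪R (ycirc ψ (t s)), R (cross3 (ycirc' ψ (t s)) (ycirc ψ (t s)))⟫ = 0 := by
        rw [R.inner_map_map]; exact inner_y_cross ψ (t s)
      rcases hN' with h | h <;> rw [hα', h]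
      · rw [real_inner_smul_left, hbase, mul_zero]
      · rw [inner_neg_right, real_inner_smul_left, hbase, mul_zero, neg_zero]
    · refine ⟨R (e3 0 0 1), by rw [R.norm_map]; exact norm_e3_001, ⟪N s₀, R (e3 0 0 1)⟫, ?_⟩
      have hval : ∀ s ∈ I, ⟪N s, R (e3 0 0 1)⟫ = Real.sin ψ ∨
          ⟪N s, R (e3 0 0 1)⟫ = -Real.sin ψ := by
        intro s hs
        obtain ⟨hu, hα', hN'⟩ := hgeo s hs
        have hbase : ⟪R (cross3 (ycirc' ψ (t s)) (ycirc ψ (t s))), R (e3 0 0 1)⟫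
            = -Real.sin ψ := by
          rw [R.inner_map_map]; exact inner_cross_e3 ψ (t s)
        rcases hN' with h | h <;> rw [h]
        · right; exact hbase
        · left; rw [inner_neg_left, hbase, neg_neg]
      have hcont : ∀ s ∈ I, ContinuousAt (fun s => ⟪N s, R (e3 0 0 1)⟫) s := by
        intro s hs
        exact ((hN s hs).continuousAt).inner continuousAt_const
      intro s hs
      exact const_of_discrete_values hIc hsψ hcont hval hs hs₀
  · rintro ⟨hrect, U, hU, k, hk⟩
    -- inner product frame facts
    have hTT : ∀ s ∈ I, ⟪T s, T s⟫ = 1 := by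
      intro s hs; rw [real_inner_self_eq_norm_sq, hTu s hs]; norm_num
    have hNN : ∀ s ∈ I, ⟪N s, N s⟫ = 1 := by
      intro s hs; rw [real_inner_self_eq_norm_sq, hNu s hs]; norm_num
    have hUU : ⟪U, U⟫ = 1 := by
      rw [real_inner_self_eq_norm_sq, hU]; norm_num
    have hTN : ∀ s ∈ I, ⟪T s, N s⟫ = 0 := by
      intro s hs
      have hd : HasDerivAt (fun x => ⟪T x, T x⟫)
          (⟪T s, κ s • N s⟫ + ⟪κ s • N s, T s⟫) s := (hT s hs).inner ℝ (hT s hs)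
      have h0 := deriv_eq_zero_of_const hIo hs hd hTT
      rw [real_inner_smul_right, real_inner_smul_left, real_inner_comm (T s) (N s)] at h0
      have hx : κ s * ⟪T s, N s⟫ = 0 := by linarith
      exact (mul_eq_zero.mp hx).resolve_left (hκ s hs).ne'
    have hTB : ∀ s ∈ I, ⟪T s, B s⟫ = 0 := by
      intro s hs
      rw [hBdef s hs, real_inner_comm]; exact cross3_inner_left _ _
    have hNB : ∀ s ∈ I, ⟪N s, B s⟫ = 0 := by
      intro s hs
      rw [hBdef s hs, real_inner_comm]; exact cross3_inner_right _ _
    have hBB : ∀ s ∈ I, ⟪B s, B s⟫ = 1 := by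
      intro s hs
      rw [hBdef s hs, cross3_lagrange, hTT s hs, hNN s hs, hTN s hs]; norm_num
    -- expansion in the Frenet frame
    have hexp : ∀ s ∈ I, ∀ x : E3,
        x = ⟪x, T s⟫ • T s + ⟪x, N s⟫ • N s + ⟪x, B s⟫ • B s := by
      intro s hs x
      set y := x - (⟪x, T s⟫ • T s + ⟪x, N s⟫ • N s + ⟪x, B s⟫ • B s) with hy
      have hyT : ⟪y, T s⟫ = 0 := by
        simp only [hy, inner_sub_left, inner_add_left, real_inner_smul_left]
        rw [hTT s hs, real_inner_comm (T s) (N s), hTN s hs,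
          real_inner_comm (T s) (B s), hTB s hs]; ring
      have hyN : ⟪y, N s⟫ = 0 := by
        simp only [hy, inner_sub_left, inner_add_left, real_inner_smul_left]
        rw [hNN s hs, hTN s hs, real_inner_comm (N s) (B s), hNB s hs]; ring
      have hyB : ⟪y, B s⟫ = 0 := by
        simp only [hy, inner_sub_left, inner_add_left, real_inner_smul_left]
        rw [hBB s hs, hTB s hs, hNB s hs]; ring
      have hcross : cross3 y (B s) = 0 := by
        rw [hBdef s hs, cross3_triple, hyN, hyT]; simp
      have hyy : ⟪y, y⟫ = 0 := by
        have hl := cross3_lagrange y (B s)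
        rw [hcross, hBB s hs, hyB] at hl
        simpa using hl.symm
      have hy0 : y = 0 := by rwa [inner_self_eq_zero] at hyy
      exact sub_eq_zero.mp hy0
    -- tangential component is s + c
    have haT : ∀ s ∈ I, HasDerivAt (fun x => ⟪α x, T x⟫ - x) 0 s := by
      intro s hs
      have hd : HasDerivAt (fun x => ⟪α x, T x⟫)
          (⟪α s, κ s • N s⟫ + ⟪T s, T s⟫) s := (hα s hs).inner ℝ (hT s hs)
      have hv : ⟪α s, κ s • N s⟫ + ⟪T s, T s⟫ = 1 := by
        rw [real_inner_smul_right, hrect s hs, hTT s hs]; ring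
      rw [hv] at hd
      have h := hd.sub (hasDerivAt_id' (x := s)); rw [sub_self] at h; exact h
    obtain ⟨c, hcdef⟩ : ∃ c : ℝ, c = ⟪α s₀, T s₀⟫ - s₀ := ⟨_, rfl⟩
    have haTc : ∀ s ∈ I, ⟪α s, T s⟫ = s + c := by
      intro s hs
      have h1 := const_of_deriv0 hIo hIc haT hs hs₀
      rw [hcdef]; linarith
    -- binormal component is the constant b
    have haB0 : ∀ s ∈ I, HasDerivAt (fun x => ⟪α x, B x⟫) 0 s := by
      intro s hs
      have hd : HasDerivAt (fun x => ⟪α x, B x⟫)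
          (⟪α s, (-τ s) • N s⟫ + ⟪T s, B s⟫) s := (hα s hs).inner ℝ (hB s hs)
      have hv : ⟪α s, (-τ s) • N s⟫ + ⟪T s, B s⟫ = 0 := by
        rw [real_inner_smul_right, hrect s hs, hTB s hs]; ring
      rwa [hv] at hd
    obtain ⟨b, hbdef⟩ : ∃ b : ℝ, b = ⟪α s₀, B s₀⟫ := ⟨_, rfl⟩
    have haBb : ∀ s ∈ I, ⟪α s, B s⟫ = b := by
      intro s hs
      rw [hbdef]
      exact const_of_deriv0 hIo hIc haB0 hs hs₀
    -- the rectifying relation κ(s+c) = τ b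
    have hrel : ∀ s ∈ I, κ s * (s + c) = τ s * b := by
      intro s hs
      have hd : HasDerivAt (fun x => ⟪α x, N x⟫)
          (⟪α s, (-κ s) • T s + τ s • B s⟫ + ⟪T s, N s⟫) s := (hα s hs).inner ℝ (hN s hs)
      have h0 := deriv_eq_zero_of_const hIo hs hd hrect
      rw [inner_add_right, real_inner_smul_right, real_inner_smul_right, haTc s hs,
        haBb s hs, hTN s hs] at h0
      linarith
    have hb0 : b ≠ 0 := by
      intro h0
      have hall : ∀ s ∈ I, s = -c := by
        intro s hs
        have h1 := hrel s hs; rw [h0, mul_zero] at h1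
        have h2 := (mul_eq_zero.mp h1).resolve_left (hκ s hs).ne'
        linarith
      obtain ⟨ε, hε, hball⟩ := Metric.isOpen_iff.mp hIo s₀ hs₀
      have h1 : s₀ + ε/2 ∈ I := by
        apply hball
        rw [Metric.mem_ball, Real.dist_eq]
        rw [abs_of_nonneg (by linarith)]
        linarith
      have h2 := hall s₀ hs₀
      have h3 := hall _ h1
      linarith
    -- the distance function ρ
    obtain ⟨ρ, hρdef⟩ : ∃ ρ : ℝ → ℝ, ρ = fun s => Real.sqrt ((s+c)^2 + b^2) := ⟨_, rfl⟩
    have hb2 : 0 < b^2 := lt_of_le_of_ne (sq_nonneg b) (Ne.symm (pow_ne_zero 2 hb0))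
    have hρpos : ∀ s : ℝ, 0 < ρ s := by
      intro s
      rw [hρdef]
      apply Real.sqrt_pos.mpr
      nlinarith [sq_nonneg (s+c)]
    have hρsq : ∀ s : ℝ, ρ s ^ 2 = (s+c)^2 + b^2 := by
      intro s
      rw [hρdef]
      apply Real.sq_sqrt
      nlinarith [sq_nonneg (s+c)]
    have hρd : ∀ s : ℝ, HasDerivAt ρ ((s + c)/ρ s) s := by
      intro s
      have h1 : HasDerivAt (fun x : ℝ => (x+c)^2 + b^2) (2*(s+c)) s := by
        have h2 := (((hasDerivAt_id s).add_const c).pow 2).add_const (b^2)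
        simpa [mul_comm] using h2
      have h2 := h1.sqrt (by nlinarith [sq_nonneg (s+c)] : (s+c)^2 + b^2 ≠ 0)
      rw [hρdef]
      convert h2 using 1
      field_simp
    -- α in the frame
    have hαexp : ∀ s ∈ I, α s = (s+c) • T s + b • B s := by
      intro s hs
      have h1 := hexp s hs (α s)
      rw [haTc s hs, hrect s hs, haBb s hs] at h1
      rw [h1]; rw [zero_smul, add_zero]
    -- inner products via the frame
    have hinner_frame : ∀ s ∈ I, ∀ x y : E3,
        ⟪x, y⟫ = ⟪x, T s⟫*⟪y, T s⟫ + ⟪x, N s⟫*⟪y, N s⟫ + ⟪x, B s⟫*⟪y, B s⟫ := by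
      intro s hs x y
      conv_lhs => rw [hexp s hs x]; rw [hexp s hs y]
      simp only [inner_add_left, inner_add_right, real_inner_smul_left, real_inner_smul_right,
        hTT s hs, hNN s hs, hBB s hs, hTN s hs, hTB s hs, hNB s hs,
        real_inner_comm (T s) (N s), real_inner_comm (T s) (B s), real_inner_comm (N s) (B s)]
      ring
    -- α has norm ρ
    have hα_norm : ∀ s ∈ I, ⟪α s, α s⟫ = ρ s ^ 2 := by
      intro s hs
      rw [hρsq s, hinner_frame s hs (α s) (α s), haTc s hs, hrect s hs, haBb s hs]
      ring
    -- derivative facts for the slant helix direction U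
    have hH : ∀ s ∈ I, HasDerivAt (fun x => ⟪α x, U⟫) (⟪T s, U⟫) s := by
      intro s hs
      have hd := (hα s hs).inner ℝ (hasDerivAt_const s U)
      simpa using hd
    have hkrel : ∀ s ∈ I, κ s * ⟪T s, U⟫ = τ s * ⟪B s, U⟫ := by
      intro s hs
      have hd := (hN s hs).inner ℝ (hasDerivAt_const s U)
      have h0 := deriv_eq_zero_of_const hIo hs hd hk
      simp only [inner_zero_right, zero_add, add_zero, inner_add_left,
        real_inner_smul_left] at h0
      linarith
    have hHeq : ∀ s ∈ I, ⟪α s, U⟫ = (s+c) * ⟪T s, U⟫ + b * ⟪B s, U⟫ := by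
      intro s hs
      rw [hinner_frame s hs (α s) U, haTc s hs, hrect s hs, haBb s hs,
        real_inner_comm (T s) U, real_inner_comm (B s) U]
      ring
    have hpb : ∀ s ∈ I, ⟪T s, U⟫ * b = (s+c) * ⟪B s, U⟫ := by
      intro s hs
      have h1 := hkrel s hs
      have h2 := hrel s hs
      have h3 : κ s * (⟪T s, U⟫ * b - (s+c) * ⟪B s, U⟫) = 0 := by
        linear_combination b * h1 - ⟪B s, U⟫ * h2
      have h4 := (mul_eq_zero.mp h3).resolve_left (hκ s hs).ne'
      linarith
    have hmain : ∀ s ∈ I, HasDerivAt (fun x => ⟪α x, U⟫ / ρ x) 0 s := by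
      intro s hs
      have hd := (hH s hs).div (hρd s) (hρpos s).ne'
      have hnum : ⟪T s, U⟫ * ρ s ^ 2 - ⟪α s, U⟫ * (s+c) = 0 := by
        rw [hρsq s, hHeq s hs]
        linear_combination b * hpb s hs
      have hv : (⟪T s, U⟫ * ρ s - ⟪α s, U⟫ * ((s+c)/ρ s)) / ρ s ^ 2 = 0 := by
        have hρne := (hρpos s).ne'
        have h5 : (⟪T s, U⟫ * ρ s - ⟪α s, U⟫ * ((s+c)/ρ s)) * ρ s = 0 := by
          have expand : (⟪T s, U⟫ * ρ s - ⟪α s, U⟫ * ((s+c)/ρ s)) * ρ s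
              = ⟪T s, U⟫ * ρ s ^ 2 - ⟪α s, U⟫ * (s+c) * (ρ s / ρ s) := by ring
          rw [expand, div_self hρne, mul_one]
          linarith [hnum]
        have h6 := (mul_eq_zero.mp h5).resolve_right hρne
        rw [h6, zero_div]
      rwa [hv] at hd
    obtain ⟨a, hadef⟩ : ∃ a : ℝ, a = ⟪α s₀, U⟫ / ρ s₀ := ⟨_, rfl⟩
    have hHa : ∀ s ∈ I, ⟪α s, U⟫ = a * ρ s := by
      intro s hs
      have h1 : ⟪α s, U⟫ / ρ s = a := by
        rw [hadef]
        exact const_of_deriv0 hIo hIc hmain hs hs₀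
      rw [div_eq_iff (hρpos s).ne'] at h1
      linarith
    have hPeqm : ∀ s ∈ I, ρ s * ⟪T s, U⟫ = a * (s+c) := by
      intro s hs
      have e1 := hHeq s hs; have e2 := hpb s hs; have e3 := hρsq s; have e4 := hHa s hs
      have hρne := (hρpos s).ne'
      have h5 : ρ s * (⟪T s, U⟫ * ρ s - a*(s+c)) = 0 := by
        linear_combination ⟪T s, U⟫ * e3 + b * e2 - (s+c) * e1 + (s+c) * e4
      have h6 := (mul_eq_zero.mp h5).resolve_left hρne
      linarith
    have hPeq : ∀ s ∈ I, ⟪T s, U⟫ = a * (s+c) / ρ s := by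
      intro s hs
      rw [eq_div_iff (hρpos s).ne']
      linarith [hPeqm s hs]
    have hQeqm : ∀ s ∈ I, ρ s * ⟪B s, U⟫ = a * b := by
      intro s hs
      have e1 := hHeq s hs; have e2 := hpb s hs; have e3 := hρsq s; have e4 := hHa s hs
      have hρne := (hρpos s).ne'
      have h5 : ρ s * (⟪B s, U⟫ * ρ s - a*b) = 0 := by
        linear_combination ⟪B s, U⟫ * e3 - (s+c) * e2 - b * e1 + b * e4
      have h6 := (mul_eq_zero.mp h5).resolve_left hρne
      linarith
    have hQeq : ∀ s ∈ I, ⟪B s, U⟫ = a * b / ρ s := by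
      intro s hs
      rw [eq_div_iff (hρpos s).ne']
      linarith [hQeqm s hs]
    -- components of U in the frame
    have hU_k : ∀ s ∈ I, ⟪T s, U⟫^2 + k^2 + ⟪B s, U⟫^2 = 1 := by
      intro s hs
      have hUU2 : ⟪U, U⟫ = ⟪U, T s⟫^2 + ⟪U, N s⟫^2 + ⟪U, B s⟫^2 := by
        rw [hinner_frame s hs U U]; ring
      rw [hUU, real_inner_comm (T s) U, real_inner_comm (N s) U, real_inner_comm (B s) U,
        hk s hs] at hUU2
      linarith
    have hk2 : k^2 = 1 - a^2 := by
      have h1 := hU_k s₀ hs₀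
      have e2 := hPeqm s₀ hs₀
      have e3' := hQeqm s₀ hs₀
      have e4 := hρsq s₀
      have h3 : (k^2 - (1 - a^2)) * ρ s₀^2 = 0 := by
        linear_combination (ρ s₀^2) * h1 - (ρ s₀ * ⟪T s₀, U⟫ + a*(s₀+c)) * e2
          - (ρ s₀ * ⟪B s₀, U⟫ + a*b) * e3' + a^2 * e4
      have h4 := (mul_eq_zero.mp h3).resolve_right (pow_ne_zero 2 (hρpos s₀).ne')
      linarith
    have ha2le : a^2 ≤ 1 := by linarith [hk2, sq_nonneg k]
    have ha2lt : a^2 < 1 := by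
      rcases lt_or_eq_of_le ha2le with h | h
      · exact h
      · exfalso
        have hαU : ∀ s ∈ I, α s = (a * ρ s) • U := by
          intro s hs
          have hUexp := hexp s hs U
          rw [real_inner_comm (T s) U, hPeq s hs, real_inner_comm (N s) U, hk s hs,
            real_inner_comm (B s) U, hQeq s hs] at hUexp
          have hk0 : k = 0 := by
            have hksq : k^2 = 0 := by linarith [hk2]
            exact sq_eq_zero_iff.mp hksq
          rw [hk0, zero_smul, add_zero] at hUexp
          have hρne := (hρpos s).ne'
          have c1 : a * ρ s * (a*(s+c)/ρ s) = s + c := by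
            field_simp
            linear_combination (s+c) * h
          have c2 : a * ρ s * (a*b/ρ s) = b := by
            field_simp
            linear_combination h
          rw [hαexp s hs, hUexp, smul_add, smul_smul, smul_smul, c1, c2]
        have hd2 : HasDerivAt (fun x => (a * ρ x) • U) ((a * ((s₀+c)/ρ s₀)) • U) s₀ :=
          ((hρd s₀).const_mul a).smul_const U
        have hTs₀ : T s₀ = (a * ((s₀+c)/ρ s₀)) • U :=
          deriv_unique_on hIo hs₀ (hα s₀ hs₀) hd2 hαU
        have hnorm := hTu s₀ hs₀
        rw [hTs₀, norm_smul, hU, mul_one, Real.norm_eq_abs] at hnorm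
        have h7 : (a * ((s₀+c)/ρ s₀))^2 = 1 := by rw [← sq_abs, hnorm]; norm_num
        have e3 := hρsq s₀
        have hρne := (hρpos s₀).ne'
        have h8 : a^2 * (s₀+c)^2 = (s₀+c)^2 := by rw [h, one_mul]
        have h9 : a^2*(s₀+c)^2 = ρ s₀^2 := by
          have e1 : a*(s₀+c) = a * ((s₀+c)/ρ s₀) * ρ s₀ := by
            rw [mul_assoc, div_mul_cancel₀ _ hρne]
          calc a^2*(s₀+c)^2 = (a*(s₀+c))^2 := by ring
          _ = (a * ((s₀+c)/ρ s₀) * ρ s₀)^2 := by rw [← e1]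
          _ = (a * ((s₀+c)/ρ s₀))^2 * ρ s₀^2 := by ring
          _ = ρ s₀ ^2 := by rw [h7, one_mul]
        linarith [h9, e3, hb2, h8]
    have ha0 : a ≠ 0 := by
      intro h0
      have hk1 : k^2 = 1 := by rw [hk2, h0]; norm_num
      have hNU : ∀ s ∈ I, N s = k • U := by
        intro s hs
        have hUexp := hexp s hs U
        rw [real_inner_comm (T s) U, hPeq s hs, real_inner_comm (N s) U, hk s hs,
          real_inner_comm (B s) U, hQeq s hs, h0] at hUexp
        simp only [zero_mul, zero_div, zero_smul, zero_add, add_zero] at hUexp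
        rw [hUexp, smul_smul, ← sq, hk1, one_smul]
      have hd0 := deriv_eq_zero_of_const hIo hs₀ (hN s₀ hs₀) hNU
      have h1 : ⟪(-κ s₀) • T s₀ + τ s₀ • B s₀, T s₀⟫ = 0 := by rw [hd0]; exact inner_zero_left _
      rw [inner_add_left, real_inner_smul_left, real_inner_smul_left, hTT s₀ hs₀,
        real_inner_comm (T s₀) (B s₀), hTB s₀ hs₀] at h1
      have := hκ s₀ hs₀
      linarith [h1]
    -- the sign of a and the angle ψ
    obtain ⟨σ, hσdef⟩ : ∃ σ : ℝ, σ = if 0 < a then 1 else -1 := ⟨_, rfl⟩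
    have hσa : σ * a = |a| := by
      rcases lt_trichotomy a 0 with h | h | h
      · rw [hσdef, if_neg (by linarith), abs_of_neg h]; ring
      · exact absurd h ha0
      · rw [hσdef, if_pos h, abs_of_pos h]; ring
    have hσ2 : σ^2 = 1 := by rw [hσdef]; split_ifs <;> norm_num
    have hσabs : |σ| = 1 := by rw [hσdef]; split_ifs <;> norm_num
    have habs_pos : 0 < |a| := abs_pos.mpr ha0
    have habs_lt : |a| < 1 := by
      by_contra hcon
      push_neg at hcon
      have h1 : 1 ≤ |a| * |a| := by nlinarith
      have h2 := sq_abs a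
      nlinarith [h1, h2, ha2lt]
    obtain ⟨ψ, hψdef⟩ : ∃ ψ : ℝ, ψ = Real.arccos |a| := ⟨_, rfl⟩
    have hψ0 : 0 < ψ := hψdef ▸ Real.arccos_pos.mpr habs_lt
    have hψ2 : ψ < Real.pi/2 := hψdef ▸ Real.arccos_lt_pi_div_two.mpr habs_pos
    have hcψ : Real.cos ψ = |a| := hψdef ▸ Real.cos_arccos (by linarith) (le_of_lt habs_lt)
    have hsψpos : 0 < Real.sin ψ :=
      Real.sin_pos_of_pos_of_lt_pi hψ0 (by linarith [Real.pi_pos])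
    have hsψne := hsψpos.ne'
    have hsψ2 : Real.sin ψ ^ 2 = 1 - a^2 := by
      have h1 := Real.sin_sq_add_cos_sq ψ
      rw [hcψ] at h1
      have h2 := sq_abs a
      linarith
    -- an orthonormal basis whose third vector is σ • U
    have hSUnorm : ‖σ • U‖ = 1 := by rw [norm_smul, hU, mul_one, Real.norm_eq_abs, hσabs]
    have horth : Orthonormal ℝ (({2} : Set (Fin 3)).restrict ![(0:E3), 0, σ • U]) := by
      constructor
      · rintro ⟨i, hi⟩
        have hi2 : i = 2 := Set.eq_of_mem_singleton hi
        subst hi2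
        exact hSUnorm
      · rintro ⟨i, hi⟩ ⟨j, hj⟩ hij
        exfalso
        have hi2 : i = 2 := Set.eq_of_mem_singleton hi
        have hj2 : j = 2 := Set.eq_of_mem_singleton hj
        exact hij (by subst hi2; subst hj2; rfl)
    obtain ⟨f, hf⟩ := horth.exists_orthonormalBasis_extension_of_card_eq (by simp)
    have hf2 : f 2 = σ • U := hf 2 rfl
    obtain ⟨R, hRdef⟩ : ∃ R : E3 ≃ₗᵢ[ℝ] E3, R = f.repr.symm := ⟨_, rfl⟩
    have hRapply : ∀ x y z : ℝ, R (e3 x y z) = x • f 0 + y • f 1 + z • f 2 := by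
      intro x y z
      rw [hRdef, ← f.sum_repr_symm, Fin.sum_univ_three]
      rfl
    refine ⟨ψ, ⟨hψ0, hψ2⟩, R, ρ,
      fun s => Complex.arg ⟨⟪α s, f 0⟫/ρ s, ⟪α s, f 1⟫/ρ s⟩ * Real.sin ψ, ?_⟩
    intro s hs
    have hρne := (hρpos s).ne'
    refine ⟨hρpos s, ?_⟩
    beta_reduce
    -- Parseval in the basis f
    have hpars : ⟪α s, f 0⟫^2 + ⟪α s, f 1⟫^2 + ⟪α s, f 2⟫^2 = ρ s ^ 2 := by
      have hP := f.sum_inner_mul_inner (α s) (α s)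
      rw [Fin.sum_univ_three] at hP
      rw [real_inner_comm (α s) (f 0), real_inner_comm (α s) (f 1),
        real_inner_comm (α s) (f 2)] at hP
      rw [hα_norm s hs] at hP
      linear_combination hP
    have hαf2 : ⟪α s, f 2⟫ = |a| * ρ s := by
      rw [hf2, real_inner_smul_right, hHa s hs, ← hσa]; ring
    have hx12 : (⟪α s, f 0⟫/ρ s)^2 + (⟪α s, f 1⟫/ρ s)^2 = Real.sin ψ ^ 2 := by
      rw [hsψ2]
      rw [hαf2] at hpars
      have h2 : ⟪α s, f 0⟫^2 + ⟪α s, f 1⟫^2 = (1 - a^2) * ρ s^2 := by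
        linear_combination hpars - (ρ s^2) * (sq_abs a)
      rw [div_pow, div_pow, ← add_div, h2, mul_div_assoc,
        div_self (pow_ne_zero 2 hρne), mul_one]
    obtain ⟨z, hzdef⟩ : ∃ z : ℂ, z = (⟨⟪α s, f 0⟫/ρ s, ⟪α s, f 1⟫/ρ s⟩ : ℂ) := ⟨_, rfl⟩
    have hzabs : ‖z‖ = Real.sin ψ := by
      rw [Complex.norm_def, hzdef, Complex.normSq_mk]
      rw [show ⟪α s, f 0⟫/ρ s * (⟪α s, f 0⟫/ρ s) + ⟪α s, f 1⟫/ρ s * (⟪α s, f 1⟫/ρ s)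
          = (⟪α s, f 0⟫/ρ s)^2 + (⟪α s, f 1⟫/ρ s)^2 by ring, hx12]
      exact Real.sqrt_sq hsψpos.le
    have hz0 : z ≠ 0 := by
      intro h
      rw [h] at hzabs
      simp at hzabs
      linarith
    have hcos : Real.cos (Complex.arg z) = ⟪α s, f 0⟫/ρ s / Real.sin ψ := by
      rw [Complex.cos_arg hz0, hzabs, hzdef]
    have hsin : Real.sin (Complex.arg z) = ⟪α s, f 1⟫/ρ s / Real.sin ψ := by
      rw [Complex.sin_arg, hzabs, hzdef]
    have hts : Complex.arg z * Real.sin ψ / Real.sin ψ = Complex.arg z := by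
      field_simp
    have hy : ycirc ψ (Complex.arg z * Real.sin ψ) = e3 (⟪α s, f 0⟫/ρ s) (⟪α s, f 1⟫/ρ s) |a| := by
      rw [ycirc, hts, hcos, hsin, hcψ]
      rw [show Real.sin ψ * (⟪α s, f 0⟫/ρ s / Real.sin ψ) = ⟪α s, f 0⟫/ρ s by
          rw [mul_comm, div_mul_cancel₀ _ hsψne],
        show Real.sin ψ * (⟪α s, f 1⟫/ρ s / Real.sin ψ) = ⟪α s, f 1⟫/ρ s by
          rw [mul_comm, div_mul_cancel₀ _ hsψne]]
    have hRy : R (ycirc ψ (Complex.arg z * Real.sin ψ))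
        = (⟪α s, f 0⟫/ρ s) • f 0 + (⟪α s, f 1⟫/ρ s) • f 1 + |a| • f 2 := by
      rw [hy, hRapply]
    have hαsum : α s = ⟪α s, f 0⟫ • f 0 + ⟪α s, f 1⟫ • f 1 + ⟪α s, f 2⟫ • f 2 := by
      have hP := f.sum_repr' (α s)
      rw [Fin.sum_univ_three] at hP
      rw [real_inner_comm (α s) (f 0), real_inner_comm (α s) (f 1),
        real_inner_comm (α s) (f 2)] at hP
      exact hP.symm
    have hα_eq : α s = ρ s • R (ycirc ψ (Complex.arg z * Real.sin ψ)) := by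
      rw [hRy, smul_add, smul_add, smul_smul, smul_smul, smul_smul]
      rw [show ρ s * (⟪α s, f 0⟫/ρ s) = ⟪α s, f 0⟫ by
          rw [mul_comm, div_mul_cancel₀ _ hρne],
        show ρ s * (⟪α s, f 1⟫/ρ s) = ⟪α s, f 1⟫ by
          rw [mul_comm, div_mul_cancel₀ _ hρne],
        show ρ s * |a| = ⟪α s, f 2⟫ by rw [hαf2]; ring]
      exact hαsum
    rw [← hzdef]
    refine ⟨hα_eq, ?_⟩
    -- the normal condition
    have hm : R (ycirc ψ (Complex.arg z * Real.sin ψ)) = (ρ s)⁻¹ • α s := by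
      rw [hα_eq, smul_smul, inv_mul_cancel₀ hρne, one_smul]
    have hV : R (cross3 (ycirc' ψ (Complex.arg z * Real.sin ψ)) (ycirc ψ (Complex.arg z * Real.sin ψ)))
        = (Real.cos ψ/Real.sin ψ) • ((ρ s)⁻¹ • α s) - (Real.sin ψ)⁻¹ • (σ • U) := by
      rw [cross_ycirc_decomp _ _ hsψne, map_sub, map_smul, map_smul, hm]
      congr 1
      rw [show (e3 0 0 1 : E3) = e3 0 0 1 from rfl, hRapply]
      rw [hf2]
      simp
    obtain ⟨V, hVdef⟩ : ∃ V : E3,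
        V = (Real.cos ψ/Real.sin ψ) • ((ρ s)⁻¹ • α s) - (Real.sin ψ)⁻¹ • (σ • U) := ⟨_, rfl⟩
    have hVT : ⟪V, T s⟫ = 0 := by
      rw [hVdef]
      simp only [inner_sub_left, real_inner_smul_left]
      rw [haTc s hs, real_inner_comm (T s) U, hPeq s hs, hcψ, ← hσa]
      field_simp
      ring
    have hVB : ⟪V, B s⟫ = 0 := by
      rw [hVdef]
      simp only [inner_sub_left, real_inner_smul_left]
      rw [haBb s hs, real_inner_comm (B s) U, hQeq s hs, hcψ, ← hσa]
      field_simp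
      ring
    have hVV : ⟪V, V⟫ = 1 := by
      rw [hVdef]
      simp only [inner_sub_left, inner_sub_right, real_inner_smul_left, real_inner_smul_right]
      rw [hα_norm s hs, hUU, real_inner_comm (α s) U]  -- hope: ⟪U, α⟫ → ⟪α, U⟫
      rw [hHa s hs, hcψ, ← hσa]
      field_simp
      linear_combination (1 - a^2) * hσ2
        - hsψ2
    have hVframe := hinner_frame s hs V V
    rw [hVT, hVB, hVV] at hVframe
    have hd2 : ⟪V, N s⟫^2 = 1 := by linear_combination -hVframe
    have hVexp := hexp s hs V
    rw [hVT, hVB, zero_smul, zero_smul, zero_add, add_zero] at hVexp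
    have hcases : ⟪V, N s⟫ = 1 ∨ ⟪V, N s⟫ = -1 := by
      rcases mul_eq_zero.mp (show (⟪V, N s⟫ - 1) * (⟪V, N s⟫ + 1) = 0 by linear_combination hd2)
        with h | h
      · left; linarith
      · right; linarith
    rcases hcases with h | h
    · left
      rw [hV, ← hVdef, hVexp, h, one_smul]
    · right
      rw [hV, ← hVdef, hVexp, h]
      simp
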